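/- Let G be an acylindrically arboreal group and let N ⊴ G be a finite normal subgroup. Then the quotient G/N is acylindrically arboreal. Conversely, if Q is acylindrically arboreal and 1 → F → G → Q → 1 is an extension with F finite, then G is acylindrically arboreal. -/

import Mathlib

/-- An action of a group `G` by simplicial isometries (automorphisms) on a simplicial
tree, i.e. a connected acyclic simple graph, with the natural edge metric. -/
structure TreeAction (G : Type*) [Group G] where
  V : Type
  T : SimpleGraph V
  isTree : T.IsTree
  act : G →* (T ≃g T)

namespace TreeAction

variable {G : Type*} [Group G] (A : TreeAction G)

/-- The action fixes a point of the tree (the action is elliptic). -/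
def FixesPoint : Prop := ∃ x : A.V, ∀ g : G, A.act g x = x

/-- An element is elliptic if it fixes a point of the tree. -/
def Elliptic (g : G) : Prop := ∃ x : A.V, A.act g x = x

/-- The action has bounded orbits. -/
def BoundedOrbits : Prop := ∃ (x : A.V) (B : ℕ), ∀ g : G, A.T.dist x (A.act g x) ≤ B

/-- `(k, C)`-acylindricity: the pointwise stabiliser of any geodesic edge path of length
at least `k` (equivalently, in a tree, the common stabiliser of two points at distance
at least `k`) has at most `C` elements. -/
def KCAcylindrical (k C : ℕ) : Prop :=
  ∀ x y : A.V, k ≤ A.T.dist x y →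
    {g : G | A.act g x = x ∧ A.act g y = y}.Finite ∧
      {g : G | A.act g x = x ∧ A.act g y = y}.ncard ≤ C

/-- An action on a tree is acylindrical if it is `(k, C)`-acylindrical for some `k ≥ 0`,
`C ≥ 1`. -/
def Acylindrical : Prop := ∃ k C : ℕ, 1 ≤ C ∧ A.KCAcylindrical k C

/-- Bowditch's definition of acylindricity for the action on the tree. -/
def BowditchAcylindrical : Prop :=
  ∀ ε : ℕ, ∃ R N : ℕ, ∀ x y : A.V, R ≤ A.T.dist x y →
    {g : G | A.T.dist x (A.act g x) ≤ ε ∧ A.T.dist y (A.act g y) ≤ ε}.Finite ∧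
      {g : G | A.T.dist x (A.act g x) ≤ ε ∧ A.T.dist y (A.act g y) ≤ ε}.ncard ≤ N

end TreeAction

/-- A group is virtually cyclic if it has a cyclic subgroup of finite index. -/
def IsVirtuallyCyclic (G : Type*) [Group G] : Prop :=
  ∃ H : Subgroup G, H.FiniteIndex ∧ IsCyclic H

namespace TreeAction

variable {G : Type*} [Group G] (A : TreeAction G)

/-- The action is non-elementary: unbounded orbits and the group is not virtually
cyclic. -/
def NonElementary : Prop := ¬ A.BoundedOrbits ∧ ¬ IsVirtuallyCyclic G

/-- The action fixes a bi-infinite geodesic line setwise. -/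
def FixesLine : Prop :=
  ∃ ℓ : ℤ → A.V, (∀ m n : ℤ, (A.T.dist (ℓ m) (ℓ n) : ℤ) = |m - n|) ∧
    ∀ g : G, (fun v => A.act g v) '' Set.range ℓ = Set.range ℓ

end TreeAction

/-- A group is acylindrically arboreal if it admits a non-elementary acylindrical
action on a simplicial tree. -/
def AcylindricallyArboreal (G : Type*) [Group G] : Prop :=
  ∃ A : TreeAction G, A.Acylindrical ∧ A.NonElementary

/-- Property (FA⁻): every action on a simplicial tree either fixes a point or fixes a
bi-infinite geodesic setwise. -/
def PropertyFAMinus (G : Type*) [Group G] : Prop :=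
  ∀ A : TreeAction G, A.FixesPoint ∨ A.FixesLine


namespace AAAux

open SimpleGraph

/-! ### Tree geometry lemmas -/

section TreeLemmas

variable {V : Type} {T : SimpleGraph V}

lemma dist_ne_of_adj (hT : T.IsTree) {x y z : V} (h : T.Adj y z) :
    T.dist x y ≠ T.dist x z := by
  classical
  have hconn := hT.isConnected
  intro hEq
  obtain ⟨p, hp, hpl⟩ := hconn.exists_path_of_dist x y
  obtain ⟨q, hq, hql⟩ := hconn.exists_path_of_dist x z
  have hy : y ∉ q.support := by
    intro hy
    have h1 : T.dist x y ≤ (q.takeUntil y hy).length := dist_le _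
    have h2 : (q.takeUntil y hy).length + (q.dropUntil y hy).length = q.length := by
      rw [← Walk.length_append, Walk.take_spec]
    have h3 : (q.dropUntil y hy).length ≠ 0 := by
      intro h0
      exact h.ne (Walk.eq_of_length_eq_zero h0)
    omega
  have hq' : (Walk.cons h q.reverse).IsPath := by
    rw [Walk.cons_isPath_iff]
    refine ⟨hq.reverse, ?_⟩
    simpa [Walk.support_reverse] using hy
  have huniq : p.reverse = Walk.cons h q.reverse :=
    (hT.existsUnique_path y x).unique hp.reverse hq'
  have hlen := congrArg Walk.length huniq
  simp only [Walk.length_reverse, Walk.length_cons] at hlen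
  omega

lemma dist_step (hT : T.IsTree) {x y z : V} (h : T.Adj y z) :
    T.dist x z = T.dist x y + 1 ∨ T.dist x y = T.dist x z + 1 := by
  have hconn := hT.isConnected
  have h1 : T.dist x z ≤ T.dist x y + 1 := by
    have h2 := hconn.dist_triangle (u := x) (v := y) (w := z)
    rwa [dist_eq_one_iff_adj.mpr h] at h2
  have h2 : T.dist x y ≤ T.dist x z + 1 := by
    have h3 := hconn.dist_triangle (u := x) (v := z) (w := y)
    rwa [dist_eq_one_iff_adj.mpr h.symm] at h3
  have h3 := dist_ne_of_adj hT (x := x) h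
  omega

lemma unique_parent (hT : T.IsTree) (x : V) {y z₁ z₂ : V} (h1 : T.Adj y z₁) (h2 : T.Adj y z₂)
    (e1 : T.dist x z₁ + 1 = T.dist x y) (e2 : T.dist x z₂ + 1 = T.dist x y) : z₁ = z₂ := by
  classical
  have hconn := hT.isConnected
  obtain ⟨p₁, hp₁, hl₁⟩ := hconn.exists_path_of_dist x z₁
  obtain ⟨p₂, hp₂, hl₂⟩ := hconn.exists_path_of_dist x z₂
  have hy₁ : y ∉ p₁.support := by
    intro hy
    have := dist_le (p₁.takeUntil y hy)
    have := Walk.length_takeUntil_le p₁ hy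
    omega
  have hy₂ : y ∉ p₂.support := by
    intro hy
    have := dist_le (p₂.takeUntil y hy)
    have := Walk.length_takeUntil_le p₂ hy
    omega
  have w₁ : (Walk.cons h1 p₁.reverse).IsPath := by
    rw [Walk.cons_isPath_iff]
    exact ⟨hp₁.reverse, by simpa [Walk.support_reverse] using hy₁⟩
  have w₂ : (Walk.cons h2 p₂.reverse).IsPath := by
    rw [Walk.cons_isPath_iff]
    exact ⟨hp₂.reverse, by simpa [Walk.support_reverse] using hy₂⟩
  have huniq : Walk.cons h1 p₁.reverse = Walk.cons h2 p₂.reverse :=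
    (hT.existsUnique_path y x).unique w₁ w₂
  have := congrArg (fun w => Walk.getVert w 1) huniq
  simpa [Walk.getVert_cons] using this

lemma dist_seq (hT : T.IsTree) (x : ℕ → V) (hadj : ∀ i, T.Adj (x i) (x (i + 1)))
    (hnb : ∀ i, x (i + 2) ≠ x i) : ∀ m, T.dist (x 0) (x m) = m := by
  intro m
  induction m using Nat.strong_induction_on with
  | _ m ih =>
    rcases m with - | m
    · simp
    rcases m with - | m
    · exact dist_eq_one_iff_adj.mpr (hadj 0)
    show T.dist (x 0) (x (m + 2)) = m + 2
    have h0 : T.dist (x 0) (x m) = m := ih m (by omega)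
    have h1 : T.dist (x 0) (x (m + 1)) = m + 1 := ih (m + 1) (by omega)
    have hstep : T.dist (x 0) (x (m + 2)) = T.dist (x 0) (x (m + 1)) + 1 ∨
        T.dist (x 0) (x (m + 1)) = T.dist (x 0) (x (m + 2)) + 1 := dist_step hT (hadj (m + 1))
    rcases hstep with hs | hs
    · omega
    · exfalso
      exact hnb m (unique_parent hT (x 0) (hadj (m + 1)) (hadj m).symm (by omega) (by omega))

lemma iso_dist (hc : T.Connected) (e : T ≃g T) (x y : V) :
    T.dist (e x) (e y) = T.dist x y := by
  have key : ∀ (f : T ≃g T) (x y : V), T.dist (f x) (f y) ≤ T.dist x y := by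
    intro f x y
    obtain ⟨w, _, hl⟩ := hc.exists_path_of_dist x y
    have h1 := dist_le (w.map f.toHom)
    simpa [hl] using h1
  refine le_antisymm (key e x y) ?_
  simpa using key e.symm (e x) (e y)

lemma getVert_getElem? :
    ∀ {u v : V} (p : T.Walk u v) (i : ℕ), i ≤ p.length → p.support[i]? = some (p.getVert i) := by
  intro u v p
  induction p with
  | nil =>
    intro i hi
    simp only [Walk.length_nil, Nat.le_zero] at hi
    subst hi
    simp [Walk.getVert_zero]
  | cons h q ih =>
    intro i hi
    rcases i with - | j
    · simp [Walk.support_cons, Walk.getVert_zero]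
    · rw [Walk.support_cons, List.getElem?_cons_succ, Walk.getVert_cons_succ]
      exact ih j (by simpa using hi)

lemma cycle_getVert_inj {u : V} {c : T.Walk u u} (hc : c.IsCycle)
    {i j : ℕ} (hi1 : 1 ≤ i) (hi2 : i ≤ c.length) (hj1 : 1 ≤ j) (hj2 : j ≤ c.length)
    (h : c.getVert i = c.getVert j) : i = j := by
  have hnd := hc.support_nodup
  have hlen : c.support.length = c.length + 1 := Walk.length_support c
  have htail : c.support.tail.length = c.length := by
    rw [List.length_tail, hlen]
    omega
  have key : ∀ k, 1 ≤ k → k ≤ c.length → c.support.tail[k - 1]? = some (c.getVert k) := by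
    intro k h1 h2
    have h3 := getVert_getElem? c k h2
    rw [Walk.support_eq_cons] at h3
    rcases k with - | k
    · omega
    · simpa using h3
  have e1 := key i hi1 hi2
  have e2 := key j hj1 hj2
  rw [h, ← e2] at e1
  have := (List.getElem?_inj (by omega) hnd).mp e1
  omega

end TreeLemmas

end AAAux

namespace AAAux

open SimpleGraph

section QuotientConstruction

variable {G : Type} [Group G] (A : TreeAction G) (N : Subgroup G)

lemma act_mul (g h : G) (v : A.V) : A.act (g * h) v = A.act g (A.act h v) := by
  rw [map_mul]; rfl

lemma act_one (v : A.V) : A.act (1 : G) v = v := by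
  rw [map_one]; rfl

def nrel (x y : A.V) : Prop := ∃ n : N, A.act (n : G) x = y

lemma nrel_refl (x : A.V) : nrel A N x x := ⟨1, by rw [OneMemClass.coe_one, act_one]⟩

lemma nrel_symm {x y : A.V} (h : nrel A N x y) : nrel A N y x := by
  obtain ⟨n, hn⟩ := h
  refine ⟨n⁻¹, ?_⟩
  rw [← hn, InvMemClass.coe_inv, ← act_mul, inv_mul_cancel, act_one]

lemma nrel_trans {x y z : A.V} (h1 : nrel A N x y) (h2 : nrel A N y z) : nrel A N x z := by
  obtain ⟨n, hn⟩ := h1; obtain ⟨m, hm⟩ := h2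
  exact ⟨m * n, by rw [Subgroup.coe_mul, act_mul, hn, hm]⟩

def nsetoid : Setoid A.V :=
  ⟨nrel A N, ⟨nrel_refl A N, nrel_symm A N, nrel_trans A N⟩⟩

def qmk (x : A.V) : Quotient (nsetoid A N) := Quotient.mk (nsetoid A N) x

lemma qmk_eq_iff {x y : A.V} : qmk A N x = qmk A N y ↔ nrel A N x y := by
  unfold qmk
  exact ⟨fun h => Quotient.exact h, fun h => Quotient.sound h⟩

def qgraph : SimpleGraph (Quotient (nsetoid A N)) where
  Adj a b := a ≠ b ∧ ∃ x y : A.V, qmk A N x = a ∧ qmk A N y = b ∧ A.T.Adj x y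
  symm := by
    constructor
    rintro a b ⟨hne, x, y, hx, hy, hxy⟩
    exact ⟨hne.symm, y, x, hy, hx, hxy.symm⟩
  loopless := by
    constructor
    rintro a ⟨hne, -⟩
    exact hne rfl

lemma qmk_act (n : N) (x : A.V) : qmk A N (A.act (n : G) x) = qmk A N x :=
  (qmk_eq_iff A N).mpr (nrel_symm A N ⟨n, rfl⟩)

lemma proj_walk {x y : A.V} (w : A.T.Walk x y) :
    ∃ p : (qgraph A N).Walk (qmk A N x) (qmk A N y), p.length ≤ w.length := by
  induction w with
  | nil => exact ⟨Walk.nil, by simp⟩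
  | @cons u v w h q ih =>
    obtain ⟨p, hp⟩ := ih
    by_cases hc : qmk A N u = qmk A N v
    · refine ⟨p.copy hc.symm rfl, ?_⟩
      rw [Walk.length_copy, Walk.length_cons]
      omega
    · refine ⟨Walk.cons (show (qgraph A N).Adj _ _ from ⟨hc, u, v, rfl, rfl, h⟩) p, ?_⟩
      rw [Walk.length_cons, Walk.length_cons]
      omega

lemma lift_adj {a b : Quotient (nsetoid A N)} (h : (qgraph A N).Adj a b) (x : A.V)
    (hx : qmk A N x = a) : ∃ y : A.V, A.T.Adj x y ∧ qmk A N y = b := by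
  obtain ⟨hne, u, v, hu, hv, huv⟩ := h
  obtain ⟨n, hn⟩ := (qmk_eq_iff A N).mp (hu.trans hx.symm)
  refine ⟨A.act (n : G) v, ?_, ?_⟩
  · rw [← hn]
    exact (A.act (n : G)).map_adj_iff.mpr huv
  · rw [qmk_act]
    exact hv

lemma lift_walk {a b : Quotient (nsetoid A N)} (p : (qgraph A N).Walk a b) :
    ∀ x : A.V, qmk A N x = a →
      ∃ (y : A.V) (w : A.T.Walk x y), qmk A N y = b ∧ w.length = p.length := by
  induction p with
  | nil => exact fun x hx => ⟨x, Walk.nil, hx, rfl⟩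
  | cons h p ih =>
    intro x hx
    obtain ⟨y, hadj, hy⟩ := lift_adj A N h x hx
    obtain ⟨z, w, hz, hw⟩ := ih y hy
    exact ⟨z, Walk.cons hadj w, hz, by rw [Walk.length_cons, Walk.length_cons, hw]⟩

lemma qconn : (qgraph A N).Connected := by
  have hconn := A.isTree.isConnected
  haveI : Nonempty (Quotient (nsetoid A N)) := hconn.nonempty.map (qmk A N)
  refine ⟨fun a b => ?_⟩
  obtain ⟨x, hx⟩ := Quotient.exists_rep a
  obtain ⟨y, hy⟩ := Quotient.exists_rep b
  obtain ⟨w⟩ := hconn.preconnected x y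
  obtain ⟨p, -⟩ := proj_walk A N w
  rw [← hx, ← hy]
  exact p.reachable

lemma qdist_le (x y : A.V) :
    (qgraph A N).dist (qmk A N x) (qmk A N y) ≤ A.T.dist x y := by
  obtain ⟨w, -, hl⟩ := A.isTree.isConnected.exists_path_of_dist x y
  obtain ⟨p, hp⟩ := proj_walk A N w
  exact (dist_le p).trans (by omega)

lemma qdist_lift (x y : A.V) :
    ∃ n : N, A.T.dist x (A.act (n : G) y) ≤ (qgraph A N).dist (qmk A N x) (qmk A N y) := by
  obtain ⟨p, -, hl⟩ := (qconn A N).exists_path_of_dist (qmk A N x) (qmk A N y)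
  obtain ⟨y', w, hy', hw⟩ := lift_walk A N p x rfl
  obtain ⟨n, hn⟩ := (qmk_eq_iff A N).mp hy'.symm
  refine ⟨n, ?_⟩
  rw [hn]
  calc A.T.dist x y' ≤ w.length := dist_le w
  _ = p.length := hw
  _ = _ := hl

/-- Lift of a combinatorial sequence of adjacent vertices through the quotient map. -/
noncomputable def liftSeq (av : ℕ → Quotient (nsetoid A N))
    (hadj : ∀ i, (qgraph A N).Adj (av i) (av (i + 1)))
    (x0 : A.V) (hx0 : qmk A N x0 = av 0) : ∀ i : ℕ, {v : A.V // qmk A N v = av i}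
  | 0 => ⟨x0, hx0⟩
  | (i + 1) =>
    ⟨(lift_adj A N (hadj i) (liftSeq av hadj x0 hx0 i).1 (liftSeq av hadj x0 hx0 i).2).choose,
      (lift_adj A N (hadj i) (liftSeq av hadj x0 hx0 i).1
        (liftSeq av hadj x0 hx0 i).2).choose_spec.2⟩

lemma liftSeq_adj (av : ℕ → Quotient (nsetoid A N))
    (hadj : ∀ i, (qgraph A N).Adj (av i) (av (i + 1)))
    (x0 : A.V) (hx0 : qmk A N x0 = av 0) (i : ℕ) :
    A.T.Adj (liftSeq A N av hadj x0 hx0 i).1 (liftSeq A N av hadj x0 hx0 (i + 1)).1 :=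
  (lift_adj A N (hadj i) (liftSeq A N av hadj x0 hx0 i).1
    (liftSeq A N av hadj x0 hx0 i).2).choose_spec.1

lemma qacyclic [Finite N] : (qgraph A N).IsAcyclic := by
  intro a c hc
  have hL : 3 ≤ c.length := hc.three_le_length
  set L := c.length with hLdef
  have hLpos : 0 < L := by omega
  have hmodlt : ∀ i : ℕ, i % L < L := fun i => Nat.mod_lt _ hLpos
  have hsucc : ∀ i : ℕ, (i + 1) % L = if i % L + 1 = L then 0 else i % L + 1 := by
    intro i
    have h1 : 1 % L = 1 := Nat.mod_eq_of_lt (by omega)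
    rw [Nat.add_mod, h1]
    rcases eq_or_ne (i % L + 1) L with h | h
    · rw [h, Nat.mod_self]
      simp
    · rw [Nat.mod_eq_of_lt (by have := hmodlt i; omega), if_neg h]
  have hgv0 : c.getVert 0 = c.getVert L := by
    rw [Walk.getVert_zero, hLdef, Walk.getVert_length]
  -- the periodic sequence of classes going around the cycle
  have hadjq : ∀ i : ℕ, (qgraph A N).Adj (c.getVert (i % L)) (c.getVert ((i + 1) % L)) := by
    intro i
    have e1 := hsucc i
    have hj := hmodlt i
    rcases eq_or_ne (i % L + 1) L with h1 | h1
    · rw [if_pos h1] at e1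
      rw [e1, hgv0]
      have h2 : (qgraph A N).Adj (c.getVert (i % L)) (c.getVert (i % L + 1)) :=
        c.adj_getVert_succ (i := i % L) (by omega)
      rwa [h1] at h2
    · rw [if_neg h1] at e1
      rw [e1]
      exact c.adj_getVert_succ (i := i % L) (by omega)
  have hneq : ∀ i : ℕ, c.getVert ((i + 2) % L) ≠ c.getVert (i % L) := by
    intro i h
    have e1 := hsucc i
    have e2 := hsucc (i + 1)
    have hj := hmodlt i
    have norm : ∀ k : ℕ, ∃ k', 1 ≤ k' ∧ k' ≤ L ∧ c.getVert (k % L) = c.getVert k' ∧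
        ((k % L ≠ 0 ∧ k' = k % L) ∨ (k % L = 0 ∧ k' = L)) := by
      intro k
      rcases eq_or_ne (k % L) 0 with h0 | h0
      · exact ⟨L, by omega, le_rfl, by rw [h0]; exact hgv0, Or.inr ⟨h0, rfl⟩⟩
      · exact ⟨k % L, by omega, (hmodlt k).le, rfl, Or.inl ⟨h0, rfl⟩⟩
    obtain ⟨k1, hk11, hk12, hk13, hk14⟩ := norm (i + 2)
    obtain ⟨k2, hk21, hk22, hk23, hk24⟩ := norm i
    rw [hk13, hk23] at h
    have heq := cycle_getVert_inj hc hk11 hk12 hk21 hk22 h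
    have key2 : (i % L + 2 = L ∧ (i + 2) % L = 0) ∨ (i % L + 2 = L + 1 ∧ (i + 2) % L = 1) ∨
        (i % L + 2 < L ∧ (i + 2) % L = i % L + 2) := by
      have e2' : (i + 2) % L = if (i + 1) % L + 1 = L then 0 else (i + 1) % L + 1 := e2
      rcases eq_or_ne (i % L + 1) L with h1 | h1
      · rw [if_pos h1] at e1
        rw [e1] at e2'
        rw [if_neg (by omega)] at e2'
        right; left; exact ⟨by omega, by omega⟩
      · rw [if_neg h1] at e1
        rw [e1] at e2'
        rcases eq_or_ne (i % L + 1 + 1) L with h2 | h2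
        · rw [if_pos h2] at e2'
          left; exact ⟨by omega, e2'⟩
        · rw [if_neg h2] at e2'
          right; right; exact ⟨by omega, by omega⟩
    rcases key2 with ⟨u1, u2⟩ | ⟨u1, u2⟩ | ⟨u1, u2⟩ <;>
      rcases hk14 with ⟨v1, v2⟩ | ⟨v1, v2⟩ <;>
      rcases hk24 with ⟨w1, w2⟩ | ⟨w1, w2⟩ <;> omega
  -- lift the sequence
  obtain ⟨x0, hx0⟩ := Quotient.exists_rep (c.getVert (0 % L))
  have hx0' : qmk A N x0 = c.getVert (0 % L) := hx0
  let F := liftSeq A N (fun i => c.getVert (i % L)) hadjq x0 hx0'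
  have hFadj : ∀ i, A.T.Adj (F i).1 (F (i + 1)).1 :=
    liftSeq_adj A N (fun i => c.getVert (i % L)) hadjq x0 hx0'
  have hFnb : ∀ i, (F (i + 2)).1 ≠ (F i).1 := by
    intro i hEq
    have e : qmk A N (F (i + 2)).1 = qmk A N (F i).1 := by rw [hEq]
    exact hneq i (((F (i + 2)).2.symm.trans e).trans (F i).2)
  have hdist := dist_seq A.isTree (fun i => (F i).1) hFadj hFnb
  -- bound from finiteness of N
  obtain ⟨M, hM⟩ := (Set.finite_range fun n : N => A.T.dist x0 (A.act (n : G) x0)).bddAbove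
  have hcls : qmk A N (F ((M + 1) * L)).1 = qmk A N x0 := by
    have h1 : qmk A N (F ((M + 1) * L)).1 = c.getVert (((M + 1) * L) % L) :=
      (F ((M + 1) * L)).2
    have h2 : ((M + 1) * L) % L = 0 := Nat.mul_mod_left _ _
    replace h1 : qmk A N (F ((M + 1) * L)).1 = c.getVert 0 := h1.trans (by rw [h2])
    have h4 : qmk A N x0 = c.getVert 0 := by rwa [Nat.zero_mod] at hx0'
    rw [h1, h4]
  obtain ⟨n, hn⟩ := (qmk_eq_iff A N).mp hcls
  have hd1 : A.T.dist x0 (F ((M + 1) * L)).1 = (M + 1) * L := hdist _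
  have hd2 : A.T.dist x0 (A.act ((n : G))⁻¹ x0) = (M + 1) * L := by
    rw [← hd1]
    have : (F ((M + 1) * L)).1 = A.act ((n : G))⁻¹ x0 := by
      rw [← hn]
      have h3 : A.act ((n : G))⁻¹ (A.act (n : G) (F ((M + 1) * L)).1) =
          A.act ((n : G)⁻¹ * (n : G)) (F ((M + 1) * L)).1 := (act_mul A _ _ _).symm
      rw [h3, inv_mul_cancel, act_one]
    rw [this]
  have hle : A.T.dist x0 (A.act ((n : G))⁻¹ x0) ≤ M := by
    have : A.T.dist x0 (A.act ((n⁻¹ : N) : G) x0) ≤ M := hM ⟨n⁻¹, rfl⟩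
    rwa [InvMemClass.coe_inv] at this
  have hbig : M + 1 ≤ (M + 1) * L := Nat.le_mul_of_pos_right _ hLpos
  omega

end QuotientConstruction

end AAAux

namespace AAAux

open SimpleGraph

section QuotientAction

variable {G : Type} [Group G] (A : TreeAction G) (N : Subgroup G) [N.Normal]

lemma nrel_act (g : G) {x y : A.V} (h : nrel A N x y) : nrel A N (A.act g x) (A.act g y) := by
  obtain ⟨n, hn⟩ := h
  refine ⟨⟨g * (n : G) * g⁻¹, Subgroup.Normal.conj_mem ‹N.Normal› (n : G) n.2 g⟩, ?_⟩
  show A.act (g * (n : G) * g⁻¹) (A.act g x) = A.act g y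
  rw [← hn, ← act_mul, ← act_mul, show g * (n : G) * g⁻¹ * g = g * (n : G) by group]

def qmap (g : G) : Quotient (nsetoid A N) → Quotient (nsetoid A N) :=
  Quotient.map (A.act g) (fun _ _ h => nrel_act A N g h)

lemma qmap_mk (g : G) (x : A.V) : qmap A N g (qmk A N x) = qmk A N (A.act g x) := rfl

lemma qmap_comp (g h : G) (a : Quotient (nsetoid A N)) :
    qmap A N g (qmap A N h a) = qmap A N (g * h) a := by
  induction a using Quotient.ind with
  | _ x => show qmk A N (A.act g (A.act h x)) = qmk A N (A.act (g * h) x)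
           rw [act_mul]

lemma qmap_one (a : Quotient (nsetoid A N)) : qmap A N 1 a = a := by
  induction a using Quotient.ind with
  | _ x => show qmk A N (A.act 1 x) = qmk A N x
           rw [act_one]

lemma qmap_adj (g : G) {a b : Quotient (nsetoid A N)} (h : (qgraph A N).Adj a b) :
    (qgraph A N).Adj (qmap A N g a) (qmap A N g b) := by
  obtain ⟨hne, u, v, hu, hv, huv⟩ := h
  refine ⟨?_, A.act g u, A.act g v, by rw [← hu]; rfl, by rw [← hv]; rfl,
    (A.act g).map_adj_iff.mpr huv⟩
  intro hEq
  apply hne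
  have h2 := congrArg (qmap A N g⁻¹) hEq
  rwa [qmap_comp, qmap_comp, inv_mul_cancel, qmap_one, qmap_one] at h2

def qiso (g : G) : (qgraph A N) ≃g (qgraph A N) where
  toFun := qmap A N g
  invFun := qmap A N g⁻¹
  left_inv := fun a => by rw [qmap_comp, inv_mul_cancel, qmap_one]
  right_inv := fun a => by rw [qmap_comp, mul_inv_cancel, qmap_one]
  map_rel_iff' := by
    intro a b
    show (qgraph A N).Adj (qmap A N g a) (qmap A N g b) ↔ (qgraph A N).Adj a b
    constructor
    · intro h
      have h2 := qmap_adj A N g⁻¹ h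
      rwa [qmap_comp, qmap_comp, inv_mul_cancel, qmap_one, qmap_one] at h2
    · exact qmap_adj A N g

def qhom : G →* ((qgraph A N) ≃g (qgraph A N)) where
  toFun := qiso A N
  map_one' := RelIso.ext fun a => qmap_one A N a
  map_mul' := fun g h => RelIso.ext fun a => (qmap_comp A N g h a).symm

def qact : (G ⧸ N) →* ((qgraph A N) ≃g (qgraph A N)) :=
  QuotientGroup.lift N (qhom A N) (by
    intro n hn
    refine RelIso.ext fun a => ?_
    induction a using Quotient.ind with
    | _ x => exact qmk_act A N ⟨n, hn⟩ x)

lemma qact_mk (g : G) (x : A.V) :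
    (qact A N (QuotientGroup.mk g)) (qmk A N x) = qmk A N (A.act g x) := rfl

/-- The quotient tree action of `G ⧸ N`. -/
noncomputable def qTreeAction [Finite N] : TreeAction (G ⧸ N) where
  V := Quotient (nsetoid A N)
  T := qgraph A N
  isTree := ⟨qconn A N, qacyclic A N⟩
  act := qact A N

end QuotientAction

/-! ### Virtually cyclic lemmas -/

section VC

lemma vc_of_surjective {G Q : Type} [Group G] [Group Q] (π : G →* Q)
    (hs : Function.Surjective π) (h : IsVirtuallyCyclic G) : IsVirtuallyCyclic Q := by
  obtain ⟨H, hfi, hcyc⟩ := h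
  refine ⟨H.map π, ⟨?_⟩, ?_⟩
  · have hdvd : (H.map π).index ∣ H.index := Subgroup.index_map_dvd H hs
    intro h0
    rw [h0] at hdvd
    exact hfi.index_ne_zero (Nat.eq_zero_of_zero_dvd hdvd)
  · haveI := hcyc
    exact isCyclic_of_surjective (π.subgroupMap H) (π.subgroupMap_surjective H)

lemma vc_of_finite_ker {G Q : Type} [Group G] [Group Q] (π : G →* Q)
    (hs : Function.Surjective π) (hk : Finite π.ker) (h : IsVirtuallyCyclic Q) :
    IsVirtuallyCyclic G := by
  obtain ⟨H, hfi, hcyc⟩ := h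
  haveI := hcyc
  obtain ⟨q, hq⟩ := IsCyclic.exists_generator (α := H)
  obtain ⟨h, hh⟩ := hs (q : Q)
  have hker_le : π.ker ≤ H.comap π := by
    intro g hg
    rw [MonoidHom.mem_ker] at hg
    show π g ∈ H
    rw [hg]
    exact H.one_mem
  have hle : Subgroup.zpowers h ≤ H.comap π := by
    rw [Subgroup.zpowers_le]
    show π h ∈ H
    rw [hh]
    exact q.2
  refine ⟨Subgroup.zpowers h, ⟨?_⟩, ?_⟩
  · -- finite index
    have hidx : (H.comap π).index ≠ 0 := by
      rw [Subgroup.index_comap_of_surjective _ hs]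
      exact hfi.index_ne_zero
    have hrel : (Subgroup.zpowers h).relIndex (H.comap π) ≠ 0 := by
      set K := (Subgroup.zpowers h).subgroupOf (H.comap π) with hK
      have hsurj : Function.Surjective
          (fun k : π.ker => (QuotientGroup.mk (⟨(k : G), hker_le k.2⟩ : H.comap π) :
            H.comap π ⧸ K)) := by
        intro b
        induction b using QuotientGroup.induction_on with
        | H a =>
          have ha : π (a : G) ∈ H := a.2
          obtain ⟨m, hm⟩ := Subgroup.mem_zpowers_iff.mp (hq ⟨π (a : G), ha⟩)
          have hm' : (π h) ^ m = π (a : G) := by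
            rw [hh]
            have hcoe := congrArg (Subtype.val) hm
            simpa using hcoe
          have hker : (a : G) * (h ^ m)⁻¹ ∈ π.ker := by
            rw [MonoidHom.mem_ker, map_mul, map_inv, map_zpow, hm', mul_inv_cancel]
          refine ⟨⟨(a : G) * (h ^ m)⁻¹, hker⟩, ?_⟩
          rw [QuotientGroup.eq]
          rw [hK, Subgroup.mem_subgroupOf]
          show ((a : G) * (h ^ m)⁻¹)⁻¹ * (a : G) ∈ Subgroup.zpowers h
          have : ((a : G) * (h ^ m)⁻¹)⁻¹ * (a : G) = h ^ m := by group
          rw [this]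
          exact Subgroup.mem_zpowers_iff.mpr ⟨m, rfl⟩
      haveI : Finite (H.comap π ⧸ K) := Finite.of_surjective _ hsurj
      have hpos : 0 < Nat.card (H.comap π ⧸ K) := Nat.card_pos
      show K.index ≠ 0
      rw [Subgroup.index_eq_card]
      omega
    have hmul := Subgroup.relIndex_mul_index hle
    intro h0
    rw [h0] at hmul
    exact Nat.mul_ne_zero hrel hidx hmul
  · -- cyclic
    refine ⟨⟨h, Subgroup.mem_zpowers h⟩, ?_⟩
    intro x
    obtain ⟨m, hm⟩ := Subgroup.mem_zpowers_iff.mp x.2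
    exact ⟨m, Subtype.ext (by push_cast; exact hm)⟩

end VC

end AAAux

namespace AAAux

open SimpleGraph

section Main

/-- An auxiliary lemma: a common coset-counting bound. -/
lemma part1 {G : Type} [Group G] (N : Subgroup G) [N.Normal] (hfin : Finite N)
    (h : AcylindricallyArboreal G) : AcylindricallyArboreal (G ⧸ N) := by
  classical
  obtain ⟨A, ⟨k, C, hC1, hKC⟩, hNB, hNVC⟩ := h
  haveI := hfin
  refine ⟨qTreeAction A N, ⟨k, Nat.card N * Nat.card N * C, ?_, ?_⟩, ?_, ?_⟩
  · have h1 : 0 < Nat.card N := Nat.card_pos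
    have h2 : 0 < Nat.card N * Nat.card N * C := by positivity
    omega
  · -- acylindricity
    intro a b hd
    obtain ⟨x, rfl⟩ := Quotient.exists_rep a
    obtain ⟨y, rfl⟩ := Quotient.exists_rep b
    have hdist : k ≤ A.T.dist x y := le_trans hd (qdist_le A N x y)
    obtain ⟨hKfin, hKcard⟩ := hKC x y hdist
    set Sg : Set G := {g : G | qmk A N (A.act g x) = qmk A N x ∧
      qmk A N (A.act g y) = qmk A N y} with hSgdef
    have himg : {g : G ⧸ N | (qTreeAction A N).act g (Quotient.mk (nsetoid A N) x)
          = Quotient.mk (nsetoid A N) x ∧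
        (qTreeAction A N).act g (Quotient.mk (nsetoid A N) y) = Quotient.mk (nsetoid A N) y}
        = (QuotientGroup.mk : G → G ⧸ N) '' Sg := by
      ext q
      constructor
      · intro hq
        obtain ⟨g, rfl⟩ := QuotientGroup.mk_surjective q
        exact ⟨g, ⟨hq.1, hq.2⟩, rfl⟩
      · rintro ⟨g, hg, rfl⟩
        exact ⟨hg.1, hg.2⟩
    have hkey : ∀ g ∈ Sg, ∃ n m : N, A.act ((n : G) * g) x = x ∧ A.act ((m : G) * g) y = y := by
      intro g hg
      obtain ⟨n, hn⟩ := (qmk_eq_iff A N).mp hg.1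
      obtain ⟨m, hm⟩ := (qmk_eq_iff A N).mp hg.2
      exact ⟨n, m, by rw [act_mul]; exact hn, by rw [act_mul]; exact hm⟩
    set g₀ : N × N → G := fun p =>
      if hp : ∃ g, g ∈ Sg ∧ A.act ((p.1 : G) * g) x = x ∧ A.act ((p.2 : G) * g) y = y then
        hp.choose else 1 with hg₀def
    have hg₀ : ∀ p : N × N,
        (∃ g, g ∈ Sg ∧ A.act ((p.1 : G) * g) x = x ∧ A.act ((p.2 : G) * g) y = y) →
        Sg (g₀ p) ∧ A.act ((p.1 : G) * g₀ p) x = x ∧ A.act ((p.2 : G) * g₀ p) y = y := by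
      intro p hp
      rw [hg₀def]
      simp only [dif_pos hp]
      exact hp.choose_spec
    -- the elementwise comparison lemma
    have act_eq_of : ∀ (n g : G) (v : A.V), A.act (n * g) v = v → A.act g v = A.act n⁻¹ v := by
      intro n g v hv
      have h2 := congrArg (A.act n⁻¹) hv
      rwa [← act_mul, ← mul_assoc, inv_mul_cancel, one_mul] at h2
    set wit : Sg → N × N := fun g =>
      ((hkey g g.2).choose, (hkey g g.2).choose_spec.choose) with hwitdef
    have hwit : ∀ g : Sg, A.act (((wit g).1 : G) * g) x = x ∧
        A.act (((wit g).2 : G) * g) y = y := by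
      intro g
      rw [hwitdef]
      exact ⟨(hkey g g.2).choose_spec.choose_spec.1, (hkey g g.2).choose_spec.choose_spec.2⟩
    have hmem : ∀ g : Sg, (g₀ (wit g))⁻¹ * (g : G) ∈
        {g : G | A.act g x = x ∧ A.act g y = y} := by
      intro g
      have hw := hwit g
      have hex : ∃ g', g' ∈ Sg ∧ A.act (((wit g).1 : G) * g') x = x ∧
          A.act (((wit g).2 : G) * g') y = y := ⟨g, g.2, hw.1, hw.2⟩
      obtain ⟨-, h1, h2⟩ := hg₀ _ hex
      constructor
      · have ex : A.act (g : G) x = A.act (g₀ (wit g)) x :=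
          (act_eq_of _ _ _ hw.1).trans (act_eq_of _ _ _ h1).symm
        rw [act_mul, ex, ← act_mul, inv_mul_cancel, act_one]
      · have ey : A.act (g : G) y = A.act (g₀ (wit g)) y :=
          (act_eq_of _ _ _ hw.2).trans (act_eq_of _ _ _ h2).symm
        rw [act_mul, ey, ← act_mul, inv_mul_cancel, act_one]
    set Φ : Sg → (N × N) × {g : G | A.act g x = x ∧ A.act g y = y} := fun g =>
      (wit g, ⟨(g₀ (wit g))⁻¹ * (g : G), hmem g⟩) with hΦdef
    have hΦinj : Function.Injective Φ := by
      intro g g' hEq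
      rw [hΦdef] at hEq
      have h1 : wit g = wit g' := congrArg Prod.fst hEq
      have h2 : (g₀ (wit g))⁻¹ * (g : G) = (g₀ (wit g'))⁻¹ * (g' : G) :=
        congrArg (fun z => (z.2 : G)) hEq
      rw [← h1] at h2
      exact Subtype.ext (mul_left_cancel h2)
    haveI hKsub : Finite {g : G | A.act g x = x ∧ A.act g y = y} := hKfin.to_subtype
    haveI : Finite Sg := Finite.of_injective Φ hΦinj
    have hSgfin : Sg.Finite := Set.finite_coe_iff.mp ‹_›
    rw [himg]
    refine ⟨hSgfin.image _, ?_⟩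
    calc ((QuotientGroup.mk : G → G ⧸ N) '' Sg).ncard ≤ Sg.ncard := Set.ncard_image_le hSgfin
    _ = Nat.card Sg := (Nat.card_coe_set_eq _).symm
    _ ≤ Nat.card ((N × N) × {g : G | A.act g x = x ∧ A.act g y = y}) :=
        Nat.card_le_card_of_injective Φ hΦinj
    _ = Nat.card N * Nat.card N *
        Nat.card {g : G | A.act g x = x ∧ A.act g y = y} := by
        rw [Nat.card_prod, Nat.card_prod]
    _ ≤ Nat.card N * Nat.card N * C := by
        refine Nat.mul_le_mul_left _ ?_
        rw [Nat.card_coe_set_eq]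
        exact hKcard
  · -- unbounded orbits
    rintro ⟨a, B, hB⟩
    apply hNB
    obtain ⟨x, rfl⟩ := Quotient.exists_rep a
    obtain ⟨M, hM⟩ := (Set.finite_range fun n : N => A.T.dist x (A.act ((n : G))⁻¹ x)).bddAbove
    refine ⟨x, M + B, fun g => ?_⟩
    have h1 : (qgraph A N).dist (qmk A N x) (qmk A N (A.act g x)) ≤ B := hB (QuotientGroup.mk g)
    obtain ⟨n, hn⟩ := qdist_lift A N x (A.act g x)
    have h3 : A.T.dist x (A.act (n : G) (A.act g x)) ≤ B := le_trans hn h1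
    have h4 : A.T.dist (A.act ((n : G))⁻¹ x) (A.act g x) ≤ B := by
      calc A.T.dist (A.act ((n : G))⁻¹ x) (A.act g x)
          = A.T.dist (A.act (n : G) (A.act ((n : G))⁻¹ x)) (A.act (n : G) (A.act g x)) :=
            (iso_dist A.isTree.isConnected (A.act (n : G)) _ _).symm
        _ = A.T.dist x (A.act (n : G) (A.act g x)) := by
            rw [← act_mul, mul_inv_cancel, act_one]
        _ ≤ B := h3
    have h5 : A.T.dist x (A.act ((n : G))⁻¹ x) ≤ M := hM ⟨n, rfl⟩
    calc A.T.dist x (A.act g x)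
        ≤ A.T.dist x (A.act ((n : G))⁻¹ x) + A.T.dist (A.act ((n : G))⁻¹ x) (A.act g x) :=
          A.isTree.isConnected.dist_triangle
    _ ≤ M + B := by omega
  · -- not virtually cyclic
    intro hvc
    apply hNVC
    refine vc_of_finite_ker (QuotientGroup.mk' N) (QuotientGroup.mk'_surjective N) ?_ hvc
    rw [QuotientGroup.ker_mk']
    exact hfin

lemma part2 {G Q : Type} [Group G] [Group Q] (π : G →* Q) (hs : Function.Surjective π)
    (hk : Finite π.ker) (h : AcylindricallyArboreal Q) : AcylindricallyArboreal G := by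
  classical
  obtain ⟨A, ⟨k, C, hC1, hKC⟩, hNB, hNVC⟩ := h
  refine ⟨⟨A.V, A.T, A.isTree, A.act.comp π⟩, ⟨k, C * Nat.card π.ker, ?_, ?_⟩, ?_, ?_⟩
  · have h1 : 0 < Nat.card π.ker := Nat.card_pos
    have h2 : 0 < C * Nat.card π.ker := by positivity
    omega
  · intro x y hd
    obtain ⟨hfinQ, hcardQ⟩ := hKC x y hd
    haveI : Finite {q : Q | A.act q x = x ∧ A.act q y = y} := hfinQ.to_subtype
    show (π ⁻¹' {q : Q | A.act q x = x ∧ A.act q y = y}).Finite ∧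
      (π ⁻¹' {q : Q | A.act q x = x ∧ A.act q y = y}).ncard ≤ C * Nat.card π.ker
    set SQ : Set Q := {q : Q | A.act q x = x ∧ A.act q y = y} with hSQ
    set Φ : ↥(π ⁻¹' SQ) → SQ × π.ker := fun g =>
      (⟨π g, g.2⟩, ⟨(Function.surjInv hs (π g))⁻¹ * g,
        by rw [MonoidHom.mem_ker, map_mul, map_inv, Function.surjInv_eq hs, inv_mul_cancel]⟩)
      with hΦdef
    have hΦinj : Function.Injective Φ := by
      intro g g' hEq
      rw [hΦdef] at hEq
      have h1 : π g = π g' := congrArg (fun z => (z.1 : Q)) hEq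
      have h2 : (Function.surjInv hs (π g))⁻¹ * (g : G) =
          (Function.surjInv hs (π g'))⁻¹ * (g' : G) := congrArg (fun z => (z.2 : G)) hEq
      rw [← h1] at h2
      exact Subtype.ext (mul_left_cancel h2)
    haveI : Finite ↥(π ⁻¹' SQ) := Finite.of_injective Φ hΦinj
    refine ⟨Set.finite_coe_iff.mp ‹_›, ?_⟩
    calc (π ⁻¹' SQ).ncard = Nat.card ↥(π ⁻¹' SQ) := (Nat.card_coe_set_eq _).symm
    _ ≤ Nat.card (SQ × π.ker) := Nat.card_le_card_of_injective Φ hΦinj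
    _ = Nat.card SQ * Nat.card π.ker := Nat.card_prod _ _
    _ ≤ C * Nat.card π.ker := by
        refine Nat.mul_le_mul_right _ ?_
        rw [Nat.card_coe_set_eq]
        exact hcardQ
  · rintro ⟨x, B, hB⟩
    apply hNB
    refine ⟨x, B, fun q => ?_⟩
    obtain ⟨g, rfl⟩ := hs q
    exact hB g
  · intro hvc
    exact hNVC (vc_of_surjective π hs hvc)

end Main

end AAAux


/-- Acylindrical arboreality passes to quotients by finite normal subgroups, and is
inherited from the quotient along any extension with finite kernel. -/
theorem acylindricallyArboreal_finite_kernel :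
    (∀ (G : Type) [Group G] (N : Subgroup G) [N.Normal], Finite N →
      AcylindricallyArboreal G → AcylindricallyArboreal (G ⧸ N)) ∧
    (∀ (G Q : Type) [Group G] [Group Q] (π : G →* Q), Function.Surjective π →
      Finite π.ker → AcylindricallyArboreal Q → AcylindricallyArboreal G) := by
  constructor
  · intro G _ N _ hfin h
    exact AAAux.part1 N hfin h
  · intro G Q _ _ π hs hk h
    exact AAAux.part2 π hs hk h
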